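/- Let 0 < α < π/2 and let z be a nonzero complex number with |arg(z)| < α. Then (|z|·cos(α))/(1 + |z|·cos(α)) ≤ |1 − e^{−z}| ≤ 2|z|/(1 + |z|·cos(α)). -/

import Mathlib

open Complex Real

set_option maxHeartbeats 1000000 in
private lemma aux_bounds (x y r c u A : ℝ) (hx0 : 0 < x) (hr : 0 < r) (hc : 0 < c)
    (hsx : r * c ≤ x) (hu0 : 0 < u) (hu1 : u * (1 + x) ≤ 1) (hu2 : 1 - x ≤ u)
    (hu3 : u * (2 + x)^2 ≤ 4) (hr2 : r^2 = x^2 + y^2) (hA0 : 0 ≤ A) (hAlow : 1 - u ≤ A)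
    (hAsq : A^2 = (1 - u * Real.cos y)^2 + (u * Real.sin y)^2) :
    r * c / (1 + r * c) ≤ A ∧ A ≤ 2 * r / (1 + r * c) := by
  have hs : 0 < r * c := mul_pos hr hc
  have hone_sx : 0 < 1 + r * c := by linarith
  have hone_x : 0 < 1 + x := by linarith
  constructor
  · -- lower bound
    have hlow2 : r * c / (1 + r * c) ≤ 1 - u := by
      rw [div_le_iff₀ hone_sx]
      nlinarith [mul_le_mul_of_nonneg_left hsx hu0.le]
    linarith
  · -- upper bound
    have hsc : Real.sin y ^ 2 + Real.cos y ^ 2 = 1 := Real.sin_sq_add_cos_sq y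
    have hcy : 1 - Real.cos y ≤ y^2 / 2 := by
      have h1 : Real.cos y = 1 - 2 * Real.sin (y/2)^2 := by
        have h := Real.cos_two_mul (y/2)
        rw [show 2*(y/2) = y by ring] at h
        rw [h, Real.cos_sq']; ring
      have h2 : Real.sin (y/2)^2 ≤ (y/2)^2 := Real.sin_sq_le_sq
      rw [h1]; nlinarith
    have key1 : (1 - u) * (1 + x) ≤ 2 * x := by
      nlinarith [mul_le_mul_of_nonneg_right hu2 hone_x.le, mul_pos hu0 hone_x,
        sq_nonneg (1 - x)]
    have hu_le1 : u ≤ 1 := by nlinarith [mul_pos hu0 hx0]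
    have hnn : 0 ≤ (1 - u) * (1 + x) := mul_nonneg (by linarith) hone_x.le
    have key1' : (1 - u)^2 * (1 + x)^2 ≤ 4 * x^2 := by
      have h := pow_le_pow_left₀ hnn key1 2
      nlinarith [h]
    have key2 : u * (1 + x)^2 ≤ 4 := by nlinarith [sq_nonneg x]
    have hA2 : A^2 * (1 + x)^2 ≤ 4 * r^2 := by
      have e1 : A^2 = (1 - u)^2 + 2 * u * (1 - Real.cos y) := by
        rw [hAsq]; linear_combination u^2 * hsc
      rw [e1, hr2]
      have t1 : 2 * u * (1 - Real.cos y) ≤ u * y^2 := by nlinarith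
      have t3 : u * y^2 * (1 + x)^2 ≤ 4 * y^2 := by
        nlinarith [mul_le_mul_of_nonneg_left key2 (sq_nonneg y)]
      nlinarith [mul_le_mul_of_nonneg_right t1 (sq_nonneg (1 + x))]
    have hfin : A^2 ≤ (2 * r / (1 + r * c))^2 := by
      rw [div_pow, le_div_iff₀ (by positivity)]
      have hle : (1 + r * c)^2 ≤ (1 + x)^2 := by nlinarith
      calc A^2 * (1 + r * c)^2 ≤ A^2 * (1 + x)^2 := by nlinarith [sq_nonneg A]
        _ ≤ 4 * r^2 := hA2
        _ = (2 * r)^2 := by ring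
    have h2r : 0 ≤ 2 * r / (1 + r * c) := by positivity
    exact (pow_le_pow_iff_left₀ hA0 h2r two_ne_zero).mp hfin

theorem abs_one_sub_exp_neg_bounds (α : ℝ) (hα : 0 < α) (hα' : α < Real.pi / 2)
    (z : ℂ) (hz : z ≠ 0) (harg : |Complex.arg z| < α) :
    ‖z‖ * Real.cos α / (1 + ‖z‖ * Real.cos α) ≤
        ‖1 - Complex.exp (-z)‖ ∧
      ‖1 - Complex.exp (-z)‖ ≤ 2 * ‖z‖ / (1 + ‖z‖ * Real.cos α) := by
  have hpi := Real.pi_pos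
  have hr : 0 < ‖z‖ := norm_pos_iff.mpr hz
  have hc : 0 < Real.cos α := Real.cos_pos_of_mem_Ioo ⟨by linarith, hα'⟩
  have hcos : Real.cos α ≤ Real.cos (Complex.arg z) := by
    rw [← Real.cos_abs (Complex.arg z)]
    exact Real.cos_le_cos_of_nonneg_of_le_pi (abs_nonneg _) (by linarith) harg.le
  have hx : ‖z‖ * Real.cos α ≤ z.re := by
    have h1 : Real.cos (Complex.arg z) = z.re / ‖z‖ := Complex.cos_arg hz
    have h2 : ‖z‖ * Real.cos (Complex.arg z) = z.re := by
      rw [h1]; field_simp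
    nlinarith
  have hx0 : 0 < z.re := lt_of_lt_of_le (mul_pos hr hc) hx
  have hu0 : 0 < Real.exp (-z.re) := Real.exp_pos _
  have hEmul : Real.exp (-z.re) * Real.exp z.re = 1 := by
    rw [← Real.exp_add]; simp
  have hu1 : Real.exp (-z.re) * (1 + z.re) ≤ 1 := by
    have hE : 1 + z.re ≤ Real.exp z.re := by linarith [Real.add_one_le_exp z.re]
    nlinarith
  have hu2 : 1 - z.re ≤ Real.exp (-z.re) := by
    linarith [Real.add_one_le_exp (-z.re)]
  have hu3 : Real.exp (-z.re) * (2 + z.re)^2 ≤ 4 := by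
    have h1 : 1 + z.re/2 ≤ Real.exp (z.re/2) := by linarith [Real.add_one_le_exp (z.re/2)]
    have hsq2 : Real.exp (z.re/2) * Real.exp (z.re/2) = Real.exp z.re := by
      rw [← Real.exp_add]; ring_nf
    have h2 : (1 + z.re/2)^2 ≤ Real.exp z.re := by
      nlinarith [Real.exp_pos (z.re/2)]
    nlinarith [mul_le_mul_of_nonneg_left h2 hu0.le]
  have hr2 : ‖z‖^2 = z.re^2 + z.im^2 := by
    rw [Complex.sq_norm, Complex.normSq_apply]; ring
  have hA0 : 0 ≤ ‖1 - Complex.exp (-z)‖ := norm_nonneg _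
  have habs_exp : ‖Complex.exp (-z)‖ = Real.exp (-z.re) := by
    rw [Complex.norm_exp]; simp
  have hAlow : 1 - Real.exp (-z.re) ≤ ‖1 - Complex.exp (-z)‖ := by
    have h := norm_sub_norm_le (1 : ℂ) (Complex.exp (-z))
    simpa [habs_exp] using h
  have hAsq : (‖1 - Complex.exp (-z)‖)^2
      = (1 - Real.exp (-z.re) * Real.cos z.im)^2 + (Real.exp (-z.re) * Real.sin z.im)^2 := by
    rw [Complex.sq_norm, Complex.normSq_apply]
    simp [Complex.sub_re, Complex.sub_im, Complex.exp_re, Complex.exp_im,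
      Complex.neg_re, Complex.neg_im, Real.cos_neg, Real.sin_neg]
    ring
  exact aux_bounds z.re z.im (‖z‖) (Real.cos α) (Real.exp (-z.re))
    (‖1 - Complex.exp (-z)‖) hx0 hr hc hx hu0 hu1 hu2 hu3 hr2 hA0 hAlow hAsq
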